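/- For a prime p ≥ 7, let A_{10} = {a ∈ Z/pZ : a is a nonzero quadratic non-residue and a+1 is a nonzero quadratic residue mod p}, and A_{11} = {a ∈ Z/pZ : a is a nonzero quadratic non-residue and a+1 is a nonzero quadratic non-residue mod p}. Then ∑_{a ∈ A_{10}} (a^2 + a) ≡ −1/32 (mod p) and ∑_{a ∈ A_{11}} (a^2 + a) ≡ 1/32 (mod p). -/

import Mathlib

section Aux

open Finset

variable (p : ℕ) [Fact p.Prime]

private lemma aux_sum_pow_lt (i : ℕ) (hi : i < p - 1) : ∑ x : ZMod p, x ^ i = 0 :=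
  FiniteField.sum_pow_lt_card_sub_one (ZMod p) i (by rwa [ZMod.card])

private lemma aux_sum_pow_card_sub_one (hp7 : 7 ≤ p) : ∑ x : ZMod p, x ^ (p - 1) = -1 := by
  have key : ∀ x : ZMod p, x ^ (p - 1) = 1 - (if x = 0 then 1 else 0) := by
    intro x
    by_cases h : x = 0
    · simp [h, zero_pow (by omega : p - 1 ≠ 0)]
    · simp [h, ZMod.pow_card_sub_one_eq_one h]
  simp only [key]
  rw [Finset.sum_sub_distrib, Finset.sum_ite_eq' univ (0 : ZMod p) (fun _ => (1 : ZMod p))]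
  simp only [mem_univ, if_pos, sum_const, card_univ, ZMod.card, nsmul_eq_mul, mul_one]
  rw [CharP.cast_eq_zero]
  ring

private lemma aux_sum_pow (hp7 : 7 ≤ p) (i : ℕ) (hi : 0 < i) (hip : i ≤ p + 1) :
    ∑ x : ZMod p, x ^ i = if i = p - 1 then -1 else 0 := by
  rcases (by omega : i < p - 1 ∨ i = p - 1 ∨ i = p ∨ i = p + 1) with h | h | h | h
  · rw [if_neg (by omega), aux_sum_pow_lt p i h]
  · rw [if_pos h, h, aux_sum_pow_card_sub_one p hp7]
  · rw [if_neg (by omega), h]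
    simp only [ZMod.pow_card]
    simpa using aux_sum_pow_lt p 1 (by omega)
  · rw [if_neg (by omega), h]
    have hx : ∀ x : ZMod p, x ^ (p + 1) = x ^ 2 := by
      intro x
      rw [pow_succ, ZMod.pow_card, sq]
    simp only [hx]
    exact aux_sum_pow_lt p 2 (by omega)

private lemma aux_sum_shift (hp7 : 7 ≤ p) (s : ℕ) (hs : s = 1 ∨ s = p / 2 + 1) :
    ∑ a : ZMod p, a ^ s * (a + 1) ^ (p / 2 + 1) =
      if s = p / 2 + 1 then -(((p / 2 + 1).choose 2 : ℕ) : ZMod p) else 0 := by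
  have hp : p.Prime := Fact.out
  have hodd : p % 2 = 1 := hp.eq_two_or_odd.resolve_left (by omega)
  have hs' : 0 < s ∧ s ≤ p / 2 + 1 := by omega
  have expand : ∀ a : ZMod p, a ^ s * (a + 1) ^ (p / 2 + 1) =
      ∑ k ∈ range (p / 2 + 1 + 1), a ^ (s + k) * ((p / 2 + 1).choose k : ZMod p) := by
    intro a
    rw [add_pow, Finset.mul_sum]
    refine Finset.sum_congr rfl fun k hk => ?_
    rw [pow_add]
    ring
  rw [Finset.sum_congr rfl fun a _ => expand a, Finset.sum_comm]
  have inner : ∀ k ∈ range (p / 2 + 1 + 1),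
      (∑ a : ZMod p, a ^ (s + k) * ((p / 2 + 1).choose k : ZMod p)) =
        (if s + k = p - 1 then (-1 : ZMod p) else 0) * ((p / 2 + 1).choose k : ZMod p) := by
    intro k hk
    rw [mem_range] at hk
    rw [← Finset.sum_mul, aux_sum_pow p hp7 (s + k) (by omega) (by omega)]
  rw [Finset.sum_congr rfl inner]
  rcases hs with h1 | h1
  · rw [if_neg (by omega)]
    refine Finset.sum_eq_zero fun k hk => ?_
    rw [mem_range] at hk
    rw [if_neg (by omega), zero_mul]
  · rw [if_pos h1]
    subst h1
    rw [Finset.sum_eq_single (p / 2 - 1)]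
    · rw [if_pos (by omega)]
      have hsym : (p / 2 + 1).choose (p / 2 - 1) = (p / 2 + 1).choose 2 := by
        have : p / 2 + 1 - 2 = p / 2 - 1 := by omega
        rw [← this, Nat.choose_symm (by omega)]
      rw [hsym]
      ring
    · intro k hk hne
      rw [mem_range] at hk
      rw [if_neg (by omega), zero_mul]
    · intro h
      exact absurd (mem_range.mpr (by omega)) h

end Aux

open scoped Classical in
theorem sum_A10_A11 (p : ℕ) [Fact p.Prime] (hp7 : 7 ≤ p) :
    (∑ a ∈ Finset.univ.filter
        (fun a : ZMod p => (a ≠ 0 ∧ ¬ IsSquare a) ∧ (a + 1 ≠ 0 ∧ IsSquare (a + 1))),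
        (a ^ 2 + a)) = -(32 : ZMod p)⁻¹ ∧
    (∑ a ∈ Finset.univ.filter
        (fun a : ZMod p => (a ≠ 0 ∧ ¬ IsSquare a) ∧ (a + 1 ≠ 0 ∧ ¬ IsSquare (a + 1))),
        (a ^ 2 + a)) = (32 : ZMod p)⁻¹ := by
  have hp : p.Prime := Fact.out
  have hodd : p % 2 = 1 := hp.eq_two_or_odd.resolve_left (by omega)
  have h2 : (2 : ZMod p) ≠ 0 := by
    have : ((2 : ℕ) : ZMod p) ≠ 0 := by
      rw [Ne, ZMod.natCast_eq_zero_iff]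
      intro h
      have := Nat.le_of_dvd (by norm_num) h
      omega
    simpa using this
  have h4 : (4 : ZMod p) ≠ 0 := by
    have : (4 : ZMod p) = 2 * 2 := by norm_num
    rw [this]
    exact mul_ne_zero h2 h2
  have h32 : (32 : ZMod p) ≠ 0 := by
    have : (32 : ZMod p) = 2 * 2 * 2 * 2 * 2 := by norm_num
    rw [this]
    exact mul_ne_zero (mul_ne_zero (mul_ne_zero (mul_ne_zero h2 h2) h2) h2) h2
  have hne : (1 : ZMod p) ≠ -1 := by
    intro h
    apply h2
    linear_combination h
  -- component sums
  have hA : ∑ a : ZMod p, (a ^ 2 + a) = 0 := by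
    rw [Finset.sum_add_distrib, aux_sum_pow_lt p 2 (by omega), zero_add]
    simpa using aux_sum_pow_lt p 1 (by omega)
  have hB : ∑ a : ZMod p, (a ^ (p / 2 + 2) + a ^ (p / 2 + 1)) = 0 := by
    rw [Finset.sum_add_distrib, aux_sum_pow_lt p (p / 2 + 2) (by omega),
      aux_sum_pow_lt p (p / 2 + 1) (by omega), zero_add]
  have hC : ∑ a : ZMod p, a ^ 1 * (a + 1) ^ (p / 2 + 1) = 0 := by
    rw [aux_sum_shift p hp7 1 (Or.inl rfl), if_neg (by omega)]
  have hD : ∑ a : ZMod p, a ^ (p / 2 + 1) * (a + 1) ^ (p / 2 + 1) =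
      -(((p / 2 + 1).choose 2 : ℕ) : ZMod p) := by
    rw [aux_sum_shift p hp7 (p / 2 + 1) (Or.inr rfl), if_pos rfl]
  -- value of the binomial coefficient mod p
  have h2C : 2 * ((p / 2 + 1).choose 2) = (p / 2 + 1) * (p / 2) := by
    have hev : 2 ∣ (p / 2 + 1) * (p / 2) := by
      have h := Nat.even_mul_succ_self (p / 2)
      rw [mul_comm] at h
      exact h.two_dvd
    rw [Nat.choose_two_right, Nat.add_sub_cancel, Nat.mul_div_cancel' hev]
  have k1 : (2 : ZMod p) * ((p / 2 : ℕ) : ZMod p) = -1 := by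
    have hnat : ((2 * (p / 2) + 1 : ℕ) : ZMod p) = ((p : ℕ) : ZMod p) := by
      congr 1
      omega
    push_cast at hnat
    rw [ZMod.natCast_self] at hnat
    linear_combination hnat
  have hcast : (((p / 2 + 1).choose 2 : ℕ) : ZMod p) * 2 = (((p / 2 : ℕ) : ZMod p) + 1) * ((p / 2 : ℕ) : ZMod p) := by
    have := congrArg (Nat.cast : ℕ → ZMod p) h2C
    push_cast at this
    linear_combination this
  have hCval : (8 : ZMod p) * (((p / 2 + 1).choose 2 : ℕ) : ZMod p) = -1 := by
    linear_combination 4 * hcast + (2 * ((p / 2 : ℕ) : ZMod p) + 1) * k1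
  have h8 : (8 : ZMod p) ≠ 0 := by
    have : (8 : ZMod p) = 2 * 2 * 2 := by norm_num
    rw [this]
    exact mul_ne_zero (mul_ne_zero h2 h2) h2
  have hfin : (((p / 2 + 1).choose 2 : ℕ) : ZMod p) = -(8 : ZMod p)⁻¹ := by
    apply mul_left_cancel₀ h8
    rw [hCval, mul_neg, mul_inv_cancel₀ h8]
  have h84 : (8 : ZMod p)⁻¹ * 4⁻¹ = 32⁻¹ := by
    rw [← mul_inv]
    norm_num
  -- Euler criterion indicator
  have euler : ∀ a : ZMod p, a ≠ 0 → (a ^ (p / 2) = 1 ∧ IsSquare a) ∨ (a ^ (p / 2) = -1 ∧ ¬ IsSquare a) := by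
    intro a ha
    rcases ZMod.pow_div_two_eq_neg_one_or_one p ha with h | h
    · exact Or.inl ⟨h, (ZMod.euler_criterion p ha).mpr h⟩
    · refine Or.inr ⟨h, fun hsq => ?_⟩
      rw [(ZMod.euler_criterion p ha).mp hsq] at h
      exact hne h
  constructor
  · -- A10
    rw [Finset.sum_filter]
    have key : ∀ a : ZMod p,
        (if (a ≠ 0 ∧ ¬ IsSquare a) ∧ (a + 1 ≠ 0 ∧ IsSquare (a + 1)) then (a ^ 2 + a) else 0)
          = (a ^ 2 + a) * (1 - a ^ (p / 2)) * (1 + (a + 1) ^ (p / 2)) * 4⁻¹ := by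
      intro a
      by_cases ha : a = 0
      · subst ha
        simp
      by_cases hb : a + 1 = 0
      · have hz : a ^ 2 + a = 0 := by linear_combination a * hb
        simp [hb, hz]
      rcases euler a ha with ⟨e1, s1⟩ | ⟨e1, s1⟩ <;> rcases euler (a + 1) hb with ⟨e2, s2⟩ | ⟨e2, s2⟩ <;>
        rw [e1, e2]
      · rw [if_neg (by tauto)]; ring
      · rw [if_neg (by tauto)]; ring
      · rw [if_pos ⟨⟨ha, s1⟩, hb, s2⟩]
        linear_combination (-(a ^ 2 + a)) * mul_inv_cancel₀ h4
      · rw [if_neg (by tauto)]; ring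
    rw [Finset.sum_congr rfl fun a _ => key a]
    have expand : ∀ a : ZMod p,
        (a ^ 2 + a) * (1 - a ^ (p / 2)) * (1 + (a + 1) ^ (p / 2)) * 4⁻¹
          = ((a ^ 2 + a) - (a ^ (p / 2 + 2) + a ^ (p / 2 + 1)) + a ^ 1 * (a + 1) ^ (p / 2 + 1)
              - a ^ (p / 2 + 1) * (a + 1) ^ (p / 2 + 1)) * 4⁻¹ := by
      intro a
      have e1 : a ^ (p / 2 + 2) = a ^ (p / 2) * a ^ 2 := by rw [pow_add]
      have e2 : a ^ (p / 2 + 1) = a ^ (p / 2) * a := by rw [pow_add, pow_one]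
      have e3 : (a + 1) ^ (p / 2 + 1) = (a + 1) ^ (p / 2) * (a + 1) := by rw [pow_add, pow_one]
      rw [e1, e2, e3]
      ring
    rw [Finset.sum_congr rfl fun a _ => expand a, ← Finset.sum_mul,
      Finset.sum_sub_distrib, Finset.sum_add_distrib, Finset.sum_sub_distrib, hA, hB, hC, hD]
    linear_combination (4 : ZMod p)⁻¹ * hfin - h84
  · -- A11
    rw [Finset.sum_filter]
    have key : ∀ a : ZMod p,
        (if (a ≠ 0 ∧ ¬ IsSquare a) ∧ (a + 1 ≠ 0 ∧ ¬ IsSquare (a + 1)) then (a ^ 2 + a) else 0)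
          = (a ^ 2 + a) * (1 - a ^ (p / 2)) * (1 - (a + 1) ^ (p / 2)) * 4⁻¹ := by
      intro a
      by_cases ha : a = 0
      · subst ha
        simp
      by_cases hb : a + 1 = 0
      · have hz : a ^ 2 + a = 0 := by linear_combination a * hb
        simp [hb, hz]
      rcases euler a ha with ⟨e1, s1⟩ | ⟨e1, s1⟩ <;> rcases euler (a + 1) hb with ⟨e2, s2⟩ | ⟨e2, s2⟩ <;>
        rw [e1, e2]
      · rw [if_neg (by tauto)]; ring
      · rw [if_neg (by tauto)]; ring
      · rw [if_neg (by tauto)]; ring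
      · rw [if_pos ⟨⟨ha, s1⟩, hb, s2⟩]
        linear_combination (-(a ^ 2 + a)) * mul_inv_cancel₀ h4
    rw [Finset.sum_congr rfl fun a _ => key a]
    have expand : ∀ a : ZMod p,
        (a ^ 2 + a) * (1 - a ^ (p / 2)) * (1 - (a + 1) ^ (p / 2)) * 4⁻¹
          = ((a ^ 2 + a) - (a ^ (p / 2 + 2) + a ^ (p / 2 + 1)) - a ^ 1 * (a + 1) ^ (p / 2 + 1)
              + a ^ (p / 2 + 1) * (a + 1) ^ (p / 2 + 1)) * 4⁻¹ := by
      intro a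
      have e1 : a ^ (p / 2 + 2) = a ^ (p / 2) * a ^ 2 := by rw [pow_add]
      have e2 : a ^ (p / 2 + 1) = a ^ (p / 2) * a := by rw [pow_add, pow_one]
      have e3 : (a + 1) ^ (p / 2 + 1) = (a + 1) ^ (p / 2) * (a + 1) := by rw [pow_add, pow_one]
      rw [e1, e2, e3]
      ring
    rw [Finset.sum_congr rfl fun a _ => expand a, ← Finset.sum_mul,
      Finset.sum_add_distrib, Finset.sum_sub_distrib, Finset.sum_sub_distrib, hA, hB, hC, hD]
    linear_combination -(4 : ZMod p)⁻¹ * hfin + h84
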